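/- arXiv:2110.04926 — 4 statements merged into one kernel-verified Lean document; each statement's English description precedes it below -/
import Mathlib

section
/- Let f : ℝ^n → ℝ be C¹ with L-Lipschitz gradient, and let {x^t} be a sequence with ‖x^t − x^{t−1}‖ ≤ C·α_t for all t, where C > 0 and {α_t} is a positive sequence. Suppose ∑_{t=1}^∞ α_t ‖∇f(x^{t−1})‖² < ∞ and ∑_{t=1}^∞ α_t = ∞, and additionally liminf_{t→∞} ‖∇f(x^t)‖ = 0. Then lim_{t→∞} ‖∇f(x^t)‖ = 0. -/
open Filter Finset

/-- Gap-sequence argument: under summability of α_t‖∇f(x^{t−1})‖², divergence of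
∑ α_t, step bound ‖x^t − x^{t−1}‖ ≤ Cα_t, and liminf ‖∇f(x^t)‖ = 0, the full
limit lim ‖∇f(x^t)‖ = 0 holds. -/
theorem stmt_4 {n : ℕ} (f : EuclideanSpace ℝ (Fin n) → ℝ) (L C : ℝ)
    (α : ℕ → ℝ) (x : ℕ → EuclideanSpace ℝ (Fin n))
    (hC1 : ContDiff ℝ 1 f) (hL : 0 < L) (hC : 0 < C)
    (hLip : ∀ y z, ‖gradient f y - gradient f z‖ ≤ L * ‖y - z‖)
    (hα : ∀ t, 0 < α t)
    (hmove : ∀ t, ‖x (t + 1) - x t‖ ≤ C * α (t + 1))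
    (hsum : Summable (fun t => α (t + 1) * ‖gradient f (x t)‖ ^ 2))
    (hdiv : ¬ Summable α)
    (hliminf : Filter.liminf (fun t => ‖gradient f (x t)‖) atTop = 0) :
    Tendsto (fun t => ‖gradient f (x t)‖) atTop (nhds 0) := by
  set g : ℕ → ℝ := fun t => ‖gradient f (x t)‖ with hgdef
  have hgnn : ∀ t, 0 ≤ g t := fun t => norm_nonneg _
  by_contra hcon
  rw [Metric.tendsto_atTop] at hcon
  push_neg at hcon
  obtain ⟨ε, hε, hfar⟩ := hcon
  -- frequently small values (else ∑ α would converge)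
  have hsmall : ∃ᶠ t in atTop, g t < ε / 2 := by
    by_contra hns
    rw [not_frequently] at hns
    obtain ⟨M, hM⟩ := eventually_atTop.mp hns
    have hM' : ∀ t ≥ M, ε / 2 ≤ g t := fun t ht => le_of_not_gt (hM t ht)
    have h2 : Summable (fun t => α (t + M + 1)) := by
      have hbase : Summable (fun t => (2 / ε) ^ 2 *
          (α (t + M + 1) * ‖gradient f (x (t + M))‖ ^ 2)) :=
        (((summable_nat_add_iff M).mpr hsum)).mul_left _
      apply hbase.of_nonneg_of_le (fun t => (hα (t + M + 1)).le)
      intro t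
      have hge : ε / 2 ≤ g (t + M) := hM' (t + M) (Nat.le_add_left M t)
      have hsq : (ε / 2) ^ 2 ≤ g (t + M) ^ 2 := by nlinarith
      have hαpos := (hα (t + M + 1)).le
      have : 1 * α (t + M + 1) ≤ (2 / ε) ^ 2 * (ε / 2) ^ 2 * α (t + M + 1) := by
        have : (2 / ε) ^ 2 * (ε / 2) ^ 2 = 1 := by field_simp
        rw [this]
      calc α (t + M + 1) = 1 * α (t + M + 1) := (one_mul _).symm
        _ ≤ (2 / ε) ^ 2 * (ε / 2) ^ 2 * α (t + M + 1) := this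
        _ ≤ (2 / ε) ^ 2 * (g (t + M) ^ 2) * α (t + M + 1) := by
            have h4 : (0:ℝ) ≤ (2 / ε) ^ 2 := sq_nonneg _
            rw [mul_assoc, mul_assoc]
            exact mul_le_mul_of_nonneg_left (mul_le_mul_of_nonneg_right hsq hαpos) h4
        _ = (2 / ε) ^ 2 * (α (t + M + 1) * ‖gradient f (x (t + M))‖ ^ 2) := by
            show _ = (2 / ε) ^ 2 * (α (t + M + 1) * g (t + M) ^ 2); ring
    exact hdiv ((summable_nat_add_iff (M + 1)).mp (by simpa [Nat.add_comm, Nat.add_assoc, Nat.add_left_comm] using h2))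
  -- Cauchy property of partial sums
  set a : ℕ → ℝ := fun t => α (t + 1) * g t ^ 2 with hadef
  set S : ℕ → ℝ := fun m => ∑ t ∈ Finset.range m, a t with hSdef
  have hann : ∀ t, 0 ≤ a t := fun t =>
    mul_nonneg (hα (t + 1)).le (sq_nonneg _)
  have hScauchy : CauchySeq S := hsum.hasSum.tendsto_sum_nat.cauchySeq
  have hδ : 0 < ε ^ 3 / (8 * L * C) := by positivity
  obtain ⟨N, hN⟩ := Metric.cauchySeq_iff.mp hScauchy _ hδ
  -- pick k ≥ N with g k ≥ ε
  obtain ⟨k, hkN, hkε⟩ := hfar N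
  have hgk : ε ≤ g k := by
    have := hkε
    rwa [Real.dist_eq, sub_zero, abs_of_nonneg (hgnn k)] at this
  -- pick the first index ℓ > k with g ℓ < ε/2
  have hex : ∃ t, k < t ∧ g t < ε / 2 := by
    obtain ⟨t, ht1, ht2⟩ := (frequently_atTop.mp hsmall) (k + 1)
    exact ⟨t, ht1, ht2⟩
  set ℓ : ℕ := Nat.find hex with hℓdef
  obtain ⟨hkℓ, hgℓ⟩ := Nat.find_spec hex
  have hmid : ∀ t, t ∈ Finset.Ico k ℓ → ε / 2 ≤ g t := by
    intro t ht
    rw [Finset.mem_Ico] at ht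
    rcases eq_or_lt_of_le ht.1 with h | h
    · subst h; linarith
    · have := Nat.find_min hex ht.2
      push_neg at this
      exact this h
  -- sum of a over the gap is small
  have hIco : ∑ t ∈ Finset.Ico k ℓ, a t < ε ^ 3 / (8 * L * C) := by
    have h1 : ∑ t ∈ Finset.Ico k ℓ, a t = S ℓ - S k :=
      Finset.sum_Ico_eq_sub a hkℓ.le
    have h2 : dist (S ℓ) (S k) < ε ^ 3 / (8 * L * C) := hN ℓ (le_trans hkN hkℓ.le) k hkN
    rw [Real.dist_eq] at h2
    calc ∑ t ∈ Finset.Ico k ℓ, a t = S ℓ - S k := h1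
      _ ≤ |S ℓ - S k| := le_abs_self _
      _ < _ := h2
  -- bound sum of α over the gap
  set T : ℝ := ∑ t ∈ Finset.Ico k ℓ, α (t + 1) with hTdef
  have hTa : (ε / 2) ^ 2 * T ≤ ∑ t ∈ Finset.Ico k ℓ, a t := by
    rw [hTdef, Finset.mul_sum]
    apply Finset.sum_le_sum
    intro t ht
    have h1 : ε / 2 ≤ g t := hmid t ht
    have h2 : (ε / 2) ^ 2 ≤ g t ^ 2 := by nlinarith
    have := (hα (t + 1)).le
    calc (ε / 2) ^ 2 * α (t + 1) = α (t + 1) * (ε / 2) ^ 2 := by ring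
      _ ≤ α (t + 1) * g t ^ 2 := by nlinarith
  have hTnn : 0 ≤ T :=
    Finset.sum_nonneg fun t _ => (hα (t + 1)).le
  -- distance bound
  have hstep : ∀ i, dist (x i) (x (i + 1)) ≤ C * α (i + 1) := fun i => by
    rw [dist_eq_norm, norm_sub_rev]; exact hmove i
  have hdistx : dist (x k) (x ℓ) ≤ C * T := by
    have h := dist_le_Ico_sum_of_dist_le (f := x) hkℓ.le (d := fun t => C * α (t + 1))
      (fun {i} _ _ => hstep i)
    rw [hTdef, Finset.mul_sum]
    exact h
  -- Lipschitz bound contradicts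
  have hkey : ε / 2 < L * (C * T) := by
    have h1 : |g k - g ℓ| ≤ ‖gradient f (x k) - gradient f (x ℓ)‖ :=
      abs_norm_sub_norm_le _ _
    have h2 : ‖gradient f (x k) - gradient f (x ℓ)‖ ≤ L * ‖x k - x ℓ‖ := hLip _ _
    have h3 : ‖x k - x ℓ‖ = dist (x k) (x ℓ) := (dist_eq_norm _ _).symm
    have h4 : g k - g ℓ ≤ |g k - g ℓ| := le_abs_self _
    have h5 : L * dist (x k) (x ℓ) ≤ L * (C * T) := by
      apply mul_le_mul_of_nonneg_left hdistx hL.le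
    nlinarith
  have hcontra : (ε / 2) ^ 2 * T < ε ^ 3 / (8 * L * C) := lt_of_le_of_lt hTa hIco
  rw [lt_div_iff₀ (by positivity)] at hcontra
  have h6 := mul_lt_mul_of_pos_right hkey (pow_pos hε 2)
  nlinarith [h6, hcontra]
end

section
/- Let f : ℝ^n → ℝ be bounded below, and let {x^t}_{t≥0} satisfy f(x^t) ≤ f(x^{t−1}) − (N α_t / 2)‖∇f(x^{t−1})‖² + c·α_t³ for all t ≥ 1, where N, c > 0 and {α_t} are positive with ∑ α_t = ∞ and ∑ α_t³ < ∞. Then {f(x^t)} converges to some f* ∈ ℝ, ∑_{t=1}^∞ α_t ‖∇f(x^{t−1})‖² < ∞, and liminf_{t→∞} ‖∇f(x^t)‖ = 0. -/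
open Filter

set_option maxHeartbeats 1000000

/-- Approximate descent recursion: f bounded below and
f(x^{t+1}) ≤ f(x^t) − (Nα_{t+1}/2)‖∇f(x^t)‖² + c α_{t+1}³ with ∑α_t = ∞,
∑α_t³ < ∞ imply convergence of {f(x^t)}, summability of α_t‖∇f(x^{t-1})‖²,
and liminf ‖∇f(x^t)‖ = 0. -/
theorem stmt_5 {n : ℕ} (f : EuclideanSpace ℝ (Fin n) → ℝ) (N c fmin : ℝ)
    (α : ℕ → ℝ) (x : ℕ → EuclideanSpace ℝ (Fin n))
    (hN : 0 < N) (hc : 0 < c)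
    (hbd : ∀ y, fmin ≤ f y)
    (hα : ∀ t, 0 < α t)
    (hdiv : ¬ Summable α)
    (hcube : Summable (fun t => α t ^ 3))
    (hrec : ∀ t, f (x (t + 1)) ≤
      f (x t) - N * α (t + 1) / 2 * ‖gradient f (x t)‖ ^ 2 + c * α (t + 1) ^ 3) :
    (∃ fstar : ℝ, Tendsto (fun t => f (x t)) atTop (nhds fstar)) ∧
    Summable (fun t => α (t + 1) * ‖gradient f (x t)‖ ^ 2) ∧
    Filter.liminf (fun t => ‖gradient f (x t)‖) atTop = 0 := by
  set g : ℕ → ℝ := fun t => ‖gradient f (x t)‖ ^ 2 with hg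
  set a : ℕ → ℝ := fun t => N * α (t + 1) / 2 * g t with ha
  set b : ℕ → ℝ := fun t => c * α (t + 1) ^ 3 with hbdef
  have ha_nonneg : ∀ t, 0 ≤ a t := fun t =>
    mul_nonneg (div_nonneg (mul_nonneg hN.le (hα _).le) (by norm_num))
      (pow_nonneg (norm_nonneg _) 2)
  have hb_nonneg : ∀ t, 0 ≤ b t := fun t =>
    mul_nonneg hc.le (pow_nonneg (hα _).le 3)
  have hb : Summable b := by
    exact (((summable_nat_add_iff 1).mpr hcube)).mul_left c
  -- tails
  set T : ℕ → ℝ := fun t => ∑' s, b (s + t) with hT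
  have hTsummable : ∀ t, Summable (fun s => b (s + t)) := fun t =>
    (summable_nat_add_iff t).mpr hb
  have hT_nonneg : ∀ t, 0 ≤ T t := fun t =>
    tsum_nonneg (fun s => hb_nonneg _)
  have hT_succ : ∀ t, T t = b t + T (t + 1) := by
    intro t
    have := Summable.tsum_eq_zero_add (hTsummable t)
    simp only [zero_add] at this
    rw [hT]
    simp only
    rw [this]
    congr 1
    apply tsum_congr
    intro s
    congr 1
    omega
  have hT_tendsto : Tendsto T atTop (nhds 0) := by
    have h1 : ∀ t, T t = (∑' s, b s) - ∑ i ∈ Finset.range t, b i := by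
      intro t
      have := Summable.sum_add_tsum_nat_add t hb
      linarith [this]
    have h2 : Tendsto (fun t => ∑ i ∈ Finset.range t, b i) atTop (nhds (∑' s, b s)) :=
      hb.hasSum.tendsto_sum_nat
    have : Tendsto (fun t => (∑' s, b s) - ∑ i ∈ Finset.range t, b i) atTop
        (nhds ((∑' s, b s) - (∑' s, b s))) := (tendsto_const_nhds).sub h2
    simpa [← h1] using this
  -- Lyapunov sequence
  set u : ℕ → ℝ := fun t => f (x t) + T t with hu
  have hkey : ∀ t, u (t + 1) + a t ≤ u t := by
    intro t
    show f (x (t + 1)) + T (t + 1) + N * α (t + 1) / 2 * ‖gradient f (x t)‖ ^ 2 ≤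
      f (x t) + T t
    have h1 := hrec t
    have h2 := hT_succ t
    simp only [hbdef] at h2
    linarith
  have hu_anti : Antitone u := antitone_nat_of_succ_le fun t => by
    have := hkey t; have := ha_nonneg t; linarith
  have hu_bdd : ∀ t, fmin ≤ u t := fun t => by
    have := hbd (x t); have := hT_nonneg t; simp only [hu]; linarith
  have hu_conv : Tendsto u atTop (nhds (⨅ t, u t)) := by
    apply tendsto_atTop_ciInf hu_anti
    exact ⟨fmin, fun y ⟨t, ht⟩ => ht ▸ hu_bdd t⟩
  have hf_conv : Tendsto (fun t => f (x t)) atTop (nhds (⨅ t, u t)) := by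
    have : Tendsto (fun t => u t - T t) atTop (nhds ((⨅ t, u t) - 0)) :=
      hu_conv.sub hT_tendsto
    simpa [hu] using this
  -- summability of a
  have hsum_bound : ∀ m, ∑ i ∈ Finset.range m, a i ≤ u 0 - fmin := by
    intro m
    have key : ∀ m, u m + ∑ i ∈ Finset.range m, a i ≤ u 0 := by
      intro m
      induction m with
      | zero => simp
      | succ k ih =>
        rw [Finset.sum_range_succ]
        have := hkey k
        linarith
    have := key m
    have := hu_bdd m
    linarith
  have hsa : Summable a := summable_of_sum_range_le ha_nonneg hsum_bound
  have hsum : Summable (fun t => α (t + 1) * g t) := by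
    have h2 : Summable (fun t => (2 / N) * a t) := hsa.mul_left _
    have : (fun t => α (t + 1) * g t) = fun t => (2 / N) * a t := by
      funext t
      simp only [ha]
      field_simp
    rw [this]; exact h2
  refine ⟨⟨⨅ t, u t, hf_conv⟩, hsum, ?_⟩
  -- liminf
  have hfreq : ∀ ε : ℝ, 0 < ε → ∃ᶠ t in atTop, ‖gradient f (x t)‖ ≤ ε := by
    intro ε hε
    by_contra hcon
    rw [not_frequently] at hcon
    simp only [not_le] at hcon
    rw [eventually_atTop] at hcon
    obtain ⟨K, hK⟩ := hcon
    have hsum' : Summable (fun t => α (t + K + 1) * g (t + K)) :=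
      (summable_nat_add_iff K).mpr hsum
    have hcomp : Summable (fun t : ℕ => ε ^ 2 * α (t + K + 1)) := by
      apply Summable.of_nonneg_of_le
        (fun t => mul_nonneg (pow_nonneg hε.le 2) (hα _).le) _ hsum'
      intro t
      have h1 : ε ≤ ‖gradient f (x (t + K))‖ := le_of_lt (hK (t + K) (by omega))
      have h2 : ε ^ 2 ≤ g (t + K) := by
        simp only [hg]
        nlinarith [norm_nonneg (gradient f (x (t + K)))]
      have := (hα (t + K + 1)).le
      calc ε ^ 2 * α (t + K + 1) ≤ g (t + K) * α (t + K + 1) := by nlinarith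
        _ = α (t + K + 1) * g (t + K) := by ring
    have : Summable (fun t : ℕ => α (t + K + 1)) := by
      have := hcomp.mul_left (ε ^ 2)⁻¹
      have heq : (fun t : ℕ => (ε ^ 2)⁻¹ * (ε ^ 2 * α (t + K + 1))) =
          fun t : ℕ => α (t + K + 1) := by
        funext t; field_simp
      rwa [heq] at this
    have : Summable (fun t : ℕ => α (t + (K + 1))) := by
      exact this.congr fun t => by rw [add_assoc]
    exact hdiv ((summable_nat_add_iff (K + 1)).mp this)
  have hbdd_below : IsBoundedUnder (· ≥ ·) atTop (fun t => ‖gradient f (x t)‖) :=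
    isBoundedUnder_of ⟨0, fun t => norm_nonneg _⟩
  have hle : liminf (fun t => ‖gradient f (x t)‖) atTop ≤ 0 := by
    by_contra hcon
    push_neg at hcon
    have hfr := hfreq _ (half_pos hcon)
    have := liminf_le_of_frequently_le hfr hbdd_below
    linarith
  have hge : 0 ≤ liminf (fun t => ‖gradient f (x t)‖) atTop := by
    apply le_liminf_of_le
    · exact IsCoboundedUnder.of_frequently_le (hfreq 1 one_pos)
    · exact Eventually.of_forall fun t => norm_nonneg _
  linarith
end

section
/- Let θ ∈ (0,1], α > 0, β ≥ 0, and γ ∈ ((1+θ)/(1+3θ), 1], and define α_t = α/(t+β)^γ. Then there exist constants 0 < a ≤ A (depending only on α, β, γ, θ) such that for all k ≥ 1, a·(k+β)^{−ν} ≤ ∑_{t=k}^∞ α_t (∑_{j=t}^∞ α_j³)^θ ≤ A·(k+β)^{−ν}, where ν = (1+3θ)γ − (1+θ). -/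
open Real Finset

lemma mvt_step (q a : ℝ) (hq : 0 < q) (ha : 0 < a) :
    q * (a+1) ^ (-(q+1)) ≤ a ^ (-q) - (a+1) ^ (-q) ∧
    a ^ (-q) - (a+1) ^ (-q) ≤ q * a ^ (-(q+1)) := by
  have hab : a < a + 1 := by linarith
  have hcont : ContinuousOn (fun x : ℝ => x ^ (-q)) (Set.Icc a (a+1)) := by
    apply ContinuousOn.rpow_const continuousOn_id
    intro x hx
    exact Or.inl (by have : 0 < x := lt_of_lt_of_le ha hx.1; exact this.ne')
  have hderiv : ∀ x ∈ Set.Ioo a (a+1),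
      HasDerivAt (fun x : ℝ => x ^ (-q)) ((-q) * x ^ (-q - 1)) x := by
    intro x hx
    exact Real.hasDerivAt_rpow_const (Or.inl (by linarith [hx.1] : (0:ℝ) < x).ne')
  obtain ⟨c, hc, hceq⟩ := exists_hasDerivAt_eq_slope (fun x : ℝ => x ^ (-q))
    (fun x => (-q) * x ^ (-q - 1)) hab hcont hderiv
  have hc0 : 0 < c := lt_trans ha hc.1
  have key : a ^ (-q) - (a+1) ^ (-q) = q * c ^ (-(q+1)) := by
    have : (a + 1) - a = 1 := by ring
    rw [this, div_one] at hceq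
    have : -(q+1) = -q - 1 := by ring
    rw [this]
    linarith [hceq]
  constructor
  · rw [key]
    apply mul_le_mul_of_nonneg_left _ hq.le
    exact Real.rpow_le_rpow_of_nonpos hc0 hc.2.le (by linarith)
  · rw [key]
    apply mul_le_mul_of_nonneg_left _ hq.le
    exact Real.rpow_le_rpow_of_nonpos ha hc.1.le (by linarith)

lemma tail_summable (p c : ℝ) (hp : 1 < p) (hc : 1 ≤ c) :
    Summable (fun j : ℕ => (c + j) ^ (-p)) := by
  have h0 : Summable (fun n : ℕ => (n : ℝ) ^ (-p)) :=
    Real.summable_nat_rpow.2 (by linarith)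
  have h1 : Summable (fun j : ℕ => ((1 : ℝ) + j) ^ (-p)) := by
    have := (summable_nat_add_iff 1).2 h0
    apply this.congr
    intro n; push_cast; ring_nf
  apply Summable.of_nonneg_of_le _ _ h1
  · intro j; positivity
  · intro j
    exact Real.rpow_le_rpow_of_nonpos (by positivity) (by linarith) (by linarith)

lemma tail_partial (p c : ℝ) (hp : 1 < p) (hc : 1 ≤ c) (n : ℕ) :
    (c ^ (-(p-1)) - (c + n) ^ (-(p-1))) / (p-1) ≤ ∑ j ∈ range n, (c + j) ^ (-p) ∧
    ∑ j ∈ range n, (c + j) ^ (-p) ≤ c ^ (-p) + c ^ (-(p-1)) / (p-1) := by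
  set q := p - 1 with hqdef
  have hq : 0 < q := by simp only [hqdef]; linarith
  have hpq : -(q + 1) = -p := by simp [hqdef]
  have tele : ∀ N : ℕ, ∑ j ∈ range N, ((c + j) ^ (-q) - (c + j + 1) ^ (-q))
      = c ^ (-q) - (c + N) ^ (-q) := by
    intro N
    have h := Finset.sum_range_sub' (fun i : ℕ => (c + i) ^ (-q)) N
    simp only [Nat.cast_zero, add_zero] at h
    rw [← h]
    apply Finset.sum_congr rfl
    intro j _; push_cast; ring_nf
  constructor
  · rw [div_le_iff₀ hq, ← tele n, Finset.sum_mul]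
    apply Finset.sum_le_sum
    intro j _
    have hcj : (0:ℝ) < c + j := by positivity
    have := (mvt_step q (c + j) hq hcj).2
    rw [hpq] at this
    calc (c + ↑j) ^ (-q) - (c + ↑j + 1) ^ (-q)
        = (c + ↑j) ^ (-q) - ((c + ↑j) + 1) ^ (-q) := by ring_nf
      _ ≤ q * (c + ↑j) ^ (-p) := this
      _ = (c + ↑j) ^ (-p) * q := by ring
  · cases n with
    | zero => simp; positivity
    | succ m =>
      rw [Finset.sum_range_succ' (fun j : ℕ => (c + j) ^ (-p)) m]
      have h0 : (c + ((0:ℕ):ℝ)) ^ (-p) = c ^ (-p) := by norm_num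
      rw [h0]
      have hmain : ∑ j ∈ range m, (c + ↑(j+1):ℝ) ^ (-p) ≤ c ^ (-q) / q := by
        rw [div_eq_inv_mul]
        have hstep : ∀ j ∈ range m, (c + ↑(j+1):ℝ) ^ (-p)
            ≤ q⁻¹ * ((c + ↑j) ^ (-q) - (c + ↑j + 1) ^ (-q)) := by
          intro j _
          have hcj : (0:ℝ) < c + j := by positivity
          have := (mvt_step q (c + j) hq hcj).1
          rw [hpq] at this
          rw [le_inv_mul_iff₀ hq]
          calc q * (c + ↑(j+1):ℝ) ^ (-p) = q * ((c + ↑j) + 1) ^ (-p) := by push_cast; ring_nf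
            _ ≤ (c + ↑j) ^ (-q) - ((c + ↑j) + 1) ^ (-q) := this
            _ = (c + ↑j) ^ (-q) - (c + ↑j + 1) ^ (-q) := by ring_nf
        calc ∑ j ∈ range m, (c + ↑(j+1):ℝ) ^ (-p)
            ≤ ∑ j ∈ range m, q⁻¹ * ((c + ↑j) ^ (-q) - (c + ↑j + 1) ^ (-q)) :=
              Finset.sum_le_sum hstep
          _ = q⁻¹ * (c ^ (-q) - (c + m) ^ (-q)) := by rw [← Finset.mul_sum, tele m]
          _ ≤ q⁻¹ * c ^ (-q) := by
              have h1 : (0:ℝ) ≤ (c + m) ^ (-q) := by positivity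
              have h2 : (0:ℝ) ≤ q⁻¹ := by positivity
              apply mul_le_mul_of_nonneg_left (by linarith) h2
      linarith

lemma tail_lower (p c : ℝ) (hp : 1 < p) (hc : 1 ≤ c) :
    c ^ (-(p-1)) / (p-1) ≤ ∑' j : ℕ, (c + j) ^ (-p) := by
  have hs := tail_summable p c hp hc
  have hq : 0 < p - 1 := by linarith
  have hlim : Filter.Tendsto
      (fun n : ℕ => (c ^ (-(p-1)) - (c + n) ^ (-(p-1))) / (p-1)) Filter.atTop
      (nhds (c ^ (-(p-1)) / (p-1))) := by
    have h1 : Filter.Tendsto (fun n : ℕ => ((c + n : ℝ)) ^ (-(p-1))) Filter.atTop (nhds 0) := by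
      apply (tendsto_rpow_neg_atTop hq).comp
      exact Filter.tendsto_atTop_add_const_left _ c tendsto_natCast_atTop_atTop
    have := ((tendsto_const_nhds (x := c ^ (-(p-1)))).sub h1).div_const (p-1)
    simpa using this
  apply le_of_tendsto hlim
  filter_upwards with n
  calc (c ^ (-(p-1)) - (c + n) ^ (-(p-1))) / (p-1)
      ≤ ∑ j ∈ range n, (c + j) ^ (-p) := (tail_partial p c hp hc n).1
    _ ≤ ∑' j : ℕ, (c + j) ^ (-p) := Summable.sum_le_tsum _ (fun j _ => by positivity) hs

lemma tail_upper (p c : ℝ) (hp : 1 < p) (hc : 1 ≤ c) :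
    ∑' j : ℕ, (c + j) ^ (-p) ≤ (1 + 1/(p-1)) * c ^ (-(p-1)) := by
  have hq : 0 < p - 1 := by linarith
  have hb : c ^ (-p) + c ^ (-(p-1)) / (p-1) ≤ (1 + 1/(p-1)) * c ^ (-(p-1)) := by
    have h1 : c ^ (-p) ≤ c ^ (-(p-1)) :=
      Real.rpow_le_rpow_of_exponent_le hc (by linarith)
    have h2 : c ^ (-(p-1)) / (p-1) = 1/(p-1) * c ^ (-(p-1)) := by ring
    linarith [h2 ▸ le_refl (c ^ (-(p-1)) / (p-1))]
  apply le_trans _ hb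
  apply Real.tsum_le_of_sum_range_le (fun j => by positivity)
  intro n
  exact (tail_partial p c hp hc n).2

lemma inner_bounds (α γ : ℝ) (hα : 0 < α) (h3γ : 1 < 3*γ) (m : ℝ) (hm : 1 ≤ m) :
    α^3/(3*γ-1) * m^(-(3*γ-1)) ≤ (∑' j : ℕ, (α / (m + j) ^ γ) ^ 3) ∧
    (∑' j : ℕ, (α / (m + j) ^ γ) ^ 3) ≤ α^3*(1+1/(3*γ-1)) * m^(-(3*γ-1)) := by
  have hterm : ∀ j : ℕ, (α / (m + j) ^ γ) ^ 3 = α^3 * (m + j)^(-(3*γ)) := by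
    intro j
    have hx : (0:ℝ) < m + j := by positivity
    rw [div_pow, ← Real.rpow_natCast ((m+j)^γ) 3, ← Real.rpow_mul hx.le,
        div_eq_mul_inv, ← Real.rpow_neg hx.le]
    congr 1
    push_cast; ring
  have heq : (∑' j : ℕ, (α / (m + j) ^ γ) ^ 3) = α^3 * ∑' j : ℕ, (m + j)^(-(3*γ)) := by
    rw [← tsum_mul_left]
    exact tsum_congr hterm
  constructor
  · rw [heq]
    calc α^3/(3*γ-1) * m^(-(3*γ-1)) = α^3 * (m^(-(3*γ-1))/(3*γ-1)) := by ring
      _ ≤ α^3 * ∑' j : ℕ, (m + j)^(-(3*γ)) := by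
          apply mul_le_mul_of_nonneg_left _ (by positivity)
          simpa using tail_lower (3*γ) m h3γ hm
  · rw [heq]
    calc α^3 * ∑' j : ℕ, (m + j)^(-(3*γ))
        ≤ α^3 * ((1 + 1/(3*γ-1)) * m^(-(3*γ-1))) := by
          apply mul_le_mul_of_nonneg_left _ (by positivity)
          simpa using tail_upper (3*γ) m h3γ hm
      _ = α^3*(1+1/(3*γ-1)) * m^(-(3*γ-1)) := by ring

/-- For θ ∈ (0,1], α > 0, β ≥ 0, γ ∈ ((1+θ)/(1+3θ), 1] and α_t = α/(t+β)^γ, the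
weighted tail sums ∑_{t=k}^∞ α_t (∑_{j=t}^∞ α_j³)^θ are bounded above and below
by constant multiples of (k+β)^{−ν}, ν = (1+3θ)γ − (1+θ). -/
theorem stmt_8 (θ α β γ : ℝ) (hθ0 : 0 < θ) (hθ1 : θ ≤ 1)
    (hα : 0 < α) (hβ : 0 ≤ β)
    (hγ1 : (1 + θ) / (1 + 3 * θ) < γ) (hγ2 : γ ≤ 1) :
    ∃ a A : ℝ, 0 < a ∧ a ≤ A ∧ ∀ k : ℕ, 1 ≤ k →
      a * ((k : ℝ) + β) ^ (-((1 + 3 * θ) * γ - (1 + θ))) ≤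
        (∑' t : ℕ, (α / (((k + t : ℕ) : ℝ) + β) ^ γ) *
          (∑' j : ℕ, (α / (((k + t + j : ℕ) : ℝ) + β) ^ γ) ^ 3) ^ θ) ∧
      (∑' t : ℕ, (α / (((k + t : ℕ) : ℝ) + β) ^ γ) *
          (∑' j : ℕ, (α / (((k + t + j : ℕ) : ℝ) + β) ^ γ) ^ 3) ^ θ) ≤
        A * ((k : ℝ) + β) ^ (-((1 + 3 * θ) * γ - (1 + θ))) := by
  have hθ3 : (0:ℝ) < 1 + 3*θ := by linarith
  have hγν : 1 + θ < γ * (1 + 3*θ) := by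
    rw [div_lt_iff₀ hθ3] at hγ1; linarith
  set ν : ℝ := (1 + 3*θ)*γ - (1+θ) with hνdef
  have hν : 0 < ν := by simp only [hνdef]; nlinarith
  have h3γ : 1 < 3*γ := by nlinarith
  set e : ℝ := 3*γ - 1 with hedef
  have he : 0 < e := by simp only [hedef]; linarith
  set p : ℝ := γ + e*θ with hpdef
  have hpν : p - 1 = ν := by simp only [hpdef, hedef, hνdef]; ring
  have hp : 1 < p := by linarith
  set Klo : ℝ := α * (α^3/e)^θ with hKlo
  set Khi : ℝ := α * (α^3*(1+1/e))^θ with hKhi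
  have hbaselo : (0:ℝ) < α^3/e := by positivity
  have hbasehi : (0:ℝ) < α^3*(1+1/e) := by positivity
  have hKlo0 : 0 < Klo := by rw [hKlo]; positivity
  have hKhi0 : 0 < Khi := by rw [hKhi]; positivity
  have hKloKhi : Klo ≤ Khi := by
    apply mul_le_mul_of_nonneg_left _ hα.le
    apply Real.rpow_le_rpow hbaselo.le _ hθ0.le
    rw [div_eq_mul_inv, one_div]
    nlinarith [pow_pos hα 3, inv_pos.2 he]
  refine ⟨Klo * (1/ν), Khi * (1 + 1/ν), by positivity, ?_, ?_⟩
  · apply mul_le_mul hKloKhi _ (by positivity) hKhi0.le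
    have : 0 < 1/ν := by positivity
    linarith
  intro k hk
  have hc1 : (1:ℝ) ≤ (k:ℝ) + β := by
    have : (1:ℝ) ≤ (k:ℝ) := by exact_mod_cast hk
    linarith
  set c : ℝ := (k:ℝ) + β with hcdef
  have hmt : ∀ t : ℕ, (1:ℝ) ≤ c + t := fun t => by
    have : (0:ℝ) ≤ (t:ℝ) := Nat.cast_nonneg t
    linarith
  have hterm : ∀ t : ℕ,
      Klo * (c + t)^(-p) ≤ (α / (((k + t : ℕ) : ℝ) + β) ^ γ) *
          (∑' j : ℕ, (α / (((k + t + j : ℕ) : ℝ) + β) ^ γ) ^ 3) ^ θ ∧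
      (α / (((k + t : ℕ) : ℝ) + β) ^ γ) *
          (∑' j : ℕ, (α / (((k + t + j : ℕ) : ℝ) + β) ^ γ) ^ 3) ^ θ
        ≤ Khi * (c + t)^(-p) := by
    intro t
    set m : ℝ := c + t with hmdef
    have hm1 : (1:ℝ) ≤ m := hmt t
    have hm0 : (0:ℝ) < m := by linarith
    have hcast1 : (((k + t : ℕ) : ℝ) + β) = m := by
      simp only [hmdef, hcdef]; push_cast; ring
    have hinner : (∑' j : ℕ, (α / (((k + t + j : ℕ) : ℝ) + β) ^ γ) ^ 3)
        = ∑' j : ℕ, (α / (m + j) ^ γ) ^ 3 := by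
      apply tsum_congr; intro j
      congr 3
      simp only [hmdef, hcdef]; push_cast; ring
    have hib := inner_bounds α γ hα h3γ m hm1
    rw [← hedef] at hib
    have hInn0 : 0 ≤ ∑' j : ℕ, (α / (m + j) ^ γ) ^ 3 := by
      have h0 : (0:ℝ) ≤ α^3/e * m^(-e) := by positivity
      linarith [hib.1]
    have hαm : α / m ^ γ = α * m ^ (-γ) := by
      rw [Real.rpow_neg hm0.le, div_eq_mul_inv]
    have hpowlo : (α^3/e)^θ * m^(-e*θ)
        ≤ (∑' j : ℕ, (α / (m + j) ^ γ) ^ 3) ^ θ := by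
      have h1 : (α^3/e * m^(-e))^θ ≤ (∑' j : ℕ, (α / (m + j) ^ γ) ^ 3) ^ θ :=
        Real.rpow_le_rpow (by positivity) hib.1 hθ0.le
      rwa [Real.mul_rpow hbaselo.le (by positivity), ← Real.rpow_mul hm0.le] at h1
    have hpowhi : (∑' j : ℕ, (α / (m + j) ^ γ) ^ 3) ^ θ
        ≤ (α^3*(1+1/e))^θ * m^(-e*θ) := by
      have h1 : (∑' j : ℕ, (α / (m + j) ^ γ) ^ 3) ^ θ ≤ (α^3*(1+1/e) * m^(-e))^θ :=
        Real.rpow_le_rpow hInn0 hib.2 hθ0.le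
      rwa [Real.mul_rpow hbasehi.le (by positivity), ← Real.rpow_mul hm0.le] at h1
    have hsplit : m ^ (-p) = m^(-γ) * m^(-e*θ) := by
      rw [← Real.rpow_add hm0]
      congr 1
      simp only [hpdef]; ring
    constructor
    · rw [hcast1, hinner]
      calc Klo * m^(-p) = (α * m^(-γ)) * ((α^3/e)^θ * m^(-e*θ)) := by
            rw [hsplit, hKlo]; ring
        _ ≤ (α / m^γ) * (∑' j : ℕ, (α / (m + j) ^ γ) ^ 3) ^ θ := by
            rw [hαm]
            exact mul_le_mul_of_nonneg_left hpowlo (by positivity)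
    · rw [hcast1, hinner]
      calc (α / m^γ) * (∑' j : ℕ, (α / (m + j) ^ γ) ^ 3) ^ θ
          ≤ (α * m^(-γ)) * ((α^3*(1+1/e))^θ * m^(-e*θ)) := by
            rw [hαm]
            exact mul_le_mul_of_nonneg_left hpowhi (by positivity)
        _ = Khi * m^(-p) := by rw [hsplit, hKhi]; ring
  have hsum_p : Summable (fun t : ℕ => (c + t)^(-p)) := tail_summable p c hp hc1
  have hf_nonneg : ∀ t : ℕ, 0 ≤ (α / (((k + t : ℕ) : ℝ) + β) ^ γ) *
      (∑' j : ℕ, (α / (((k + t + j : ℕ) : ℝ) + β) ^ γ) ^ 3) ^ θ := by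
    intro t
    apply mul_nonneg (by positivity)
    apply Real.rpow_nonneg
    apply tsum_nonneg
    intro j; positivity
  have hf_sum : Summable (fun t : ℕ => (α / (((k + t : ℕ) : ℝ) + β) ^ γ) *
      (∑' j : ℕ, (α / (((k + t + j : ℕ) : ℝ) + β) ^ γ) ^ 3) ^ θ) :=
    Summable.of_nonneg_of_le hf_nonneg (fun t => (hterm t).2) (hsum_p.mul_left Khi)
  constructor
  · calc Klo * (1/ν) * c^(-ν) = Klo * (c^(-(p-1))/(p-1)) := by rw [hpν]; ring
      _ ≤ Klo * ∑' t : ℕ, (c+t)^(-p) :=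
          mul_le_mul_of_nonneg_left (tail_lower p c hp hc1) hKlo0.le
      _ = ∑' t : ℕ, Klo * (c+t)^(-p) := tsum_mul_left.symm
      _ ≤ _ := Summable.tsum_le_tsum (fun t => (hterm t).1) (hsum_p.mul_left Klo) hf_sum
  · calc (∑' t : ℕ, (α / (((k + t : ℕ) : ℝ) + β) ^ γ) *
          (∑' j : ℕ, (α / (((k + t + j : ℕ) : ℝ) + β) ^ γ) ^ 3) ^ θ)
        ≤ ∑' t : ℕ, Khi * (c+t)^(-p) :=
          Summable.tsum_le_tsum (fun t => (hterm t).2) hf_sum (hsum_p.mul_left Khi)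
      _ = Khi * ∑' t : ℕ, (c+t)^(-p) := tsum_mul_left
      _ ≤ Khi * ((1+1/(p-1)) * c^(-(p-1))) :=
          mul_le_mul_of_nonneg_left (tail_upper p c hp hc1) hKhi0.le
      _ = Khi * (1+1/ν) * c^(-ν) := by rw [hpν]; ring
end

section
/- Let {z_k}_{k≥1} be nonnegative reals, b ≥ 0, d, q > 0, s ∈ (0,1), τ > s, and suppose z_{k+1} ≤ (1 − q/(k+b)^s) z_k + d/(k+b)^τ for all k ≥ 1. Then limsup_{k→∞} (k+b)^{τ−s} · z_k ≤ d/q; in particular z_k = O(k^{−(τ−s)}). -/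
open Filter

private lemma bern12 {x r : ℝ} (hx : 0 ≤ x) (hr : 0 ≤ r) : 1 - r * x ≤ (1 + x) ^ (-r) := by
  have h1 : (0:ℝ) < 1 + x := by linarith
  rw [Real.rpow_def_of_pos h1]
  have h2 := Real.add_one_le_exp (Real.log (1 + x) * (-r))
  have hlog : Real.log (1 + x) ≤ x := by
    have := Real.log_le_sub_one_of_pos h1; linarith
  nlinarith [mul_le_mul_of_nonneg_right hlog hr]

private lemma stepA12 {t M p s τ q d e : ℝ} (ht0 : 0 < t) (hp0 : 0 < p) (hM0 : 0 ≤ M)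
    (hE : τ = s + p) (hqM : q * M - d = q * e) (haiii : M * p * t ^ s ≤ q * e * t) :
    (1 - q / t ^ s) * (M / t ^ p) + d / t ^ τ ≤ M / (t + 1) ^ p := by
  have hts : (0:ℝ) < t ^ s := Real.rpow_pos_of_pos ht0 s
  have htp : (0:ℝ) < t ^ p := Real.rpow_pos_of_pos ht0 p
  have hb1 : 1 - p * (1/t) ≤ (1 + 1/t) ^ (-p) := bern12 (by positivity) hp0.le
  have hsplit : (t + 1) ^ (-p) = t ^ (-p) * (1 + 1/t) ^ (-p) := by
    rw [show t + 1 = t * (1 + 1/t) by field_simp, Real.mul_rpow ht0.le (by positivity)]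
  have hMdiv : M / (t + 1) ^ p = M * (t + 1) ^ (-p) := by
    rw [Real.rpow_neg (by positivity), div_eq_mul_inv]
  rw [hMdiv, hsplit]
  have h5 : M * (t ^ (-p) * (1 - p * (1/t))) ≤ M * (t ^ (-p) * (1 + 1/t) ^ (-p)) := by
    have h6 : (0:ℝ) ≤ t ^ (-p) := (Real.rpow_pos_of_pos ht0 _).le
    gcongr
  refine le_trans ?_ h5
  have hEe : t ^ τ = t ^ s * t ^ p := by rw [hE, Real.rpow_add ht0]
  rw [Real.rpow_neg ht0.le, hEe, ← sub_nonneg]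
  have hts' : t ^ s ≠ 0 := ne_of_gt hts
  have htp' : t ^ p ≠ 0 := ne_of_gt htp
  have ht' : t ≠ 0 := ne_of_gt ht0
  have hiden : M * ((t ^ p)⁻¹ * (1 - p * (1/t))) - ((1 - q / t ^ s) * (M / t ^ p) + d / (t ^ s * t ^ p))
      = (q * M * t - (d * t + M * p * t ^ s)) / (t ^ s * t ^ p * t) := by
    field_simp
    ring
  rw [hiden]
  have h9 : (q * M - d) * t = q * e * t := by rw [hqM]
  have hnum : 0 ≤ q * M * t - (d * t + M * p * t ^ s) := by nlinarith [haiii, h9]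
  positivity

private lemma tendsto12 (b q s p : ℝ) (hb : 0 ≤ b) (hq : 0 < q) (hs0 : 0 < s)
    (hs1 : s < 1) (hp0 : 0 < p) (K : ℕ) :
    Tendsto (fun k : ℕ => ((k:ℝ) + b) ^ p *
      Real.exp (-(((k - K : ℕ):ℝ) * (q / ((k:ℝ) + b) ^ s)))) atTop (nhds 0) := by
  have h1s : (0:ℝ) < 1 - s := by linarith
  have hb1 : (0:ℝ) < 1 + b := by linarith
  set E : ℕ → ℝ := fun k => p * Real.log ((k:ℝ) + b) - ((k - K : ℕ):ℝ) * (q / ((k:ℝ) + b) ^ s)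
    with hE
  set c : ℝ := q / (2 * (1 + b) ^ s) with hc
  have hc0 : 0 < c := by
    apply div_pos hq
    positivity
  have TG : Tendsto (fun x : ℝ => p * Real.log (1 + b) + p * Real.log x - c * x ^ (1 - s))
      atTop atBot := by
    have hlo := (isLittleO_log_rpow_atTop h1s).const_mul_left p
    have hev : ∀ᶠ x : ℝ in atTop,
        p * Real.log (1 + b) + p * Real.log x - c * x ^ (1 - s)
          ≤ p * Real.log (1 + b) + (- (c / 2) * x ^ (1 - s)) := by
      filter_upwards [hlo.bound (half_pos hc0), eventually_ge_atTop (1:ℝ)] with x hx hx1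
      have h1 : p * Real.log x ≤ c / 2 * x ^ (1 - s) := by
        calc p * Real.log x ≤ ‖p * Real.log x‖ := le_abs_self _
          _ ≤ c / 2 * ‖x ^ (1 - s)‖ := hx
          _ = c / 2 * x ^ (1 - s) := by
              rw [Real.norm_eq_abs, abs_of_nonneg (Real.rpow_nonneg (by linarith) _)]
      linarith
    refine tendsto_atBot_mono' atTop hev ?_
    have h2 : Tendsto (fun x : ℝ => (c / 2) * x ^ (1 - s)) atTop atTop :=
      (tendsto_rpow_atTop h1s).const_mul_atTop (half_pos hc0)
    have h3 : Tendsto (fun x : ℝ => -((c / 2) * x ^ (1 - s))) atTop atBot :=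
      tendsto_neg_atTop_atBot.comp h2
    have := tendsto_atBot_add_const_left atTop (p * Real.log (1 + b)) h3
    simpa [sub_eq_add_neg] using this
  have TE : Tendsto E atTop atBot := by
    have hbound : ∀ᶠ k : ℕ in atTop,
        E k ≤ p * Real.log (1 + b) + p * Real.log ((k:ℝ)) - c * ((k:ℝ)) ^ (1 - s) := by
      filter_upwards [eventually_ge_atTop 1, eventually_ge_atTop (2 * K)] with k hk1 hk2
      have hk1' : (1:ℝ) ≤ (k:ℝ) := by exact_mod_cast hk1
      have hk0 : (0:ℝ) < (k:ℝ) := by linarith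
      have ht0 : (0:ℝ) < (k:ℝ) + b := by linarith
      have hle : (k:ℝ) + b ≤ (1 + b) * (k:ℝ) := by nlinarith
      have hlog : Real.log ((k:ℝ) + b) ≤ Real.log (1 + b) + Real.log (k:ℝ) := by
        calc Real.log ((k:ℝ) + b) ≤ Real.log ((1 + b) * (k:ℝ)) :=
              Real.log_le_log ht0 hle
          _ = Real.log (1 + b) + Real.log (k:ℝ) := Real.log_mul (ne_of_gt hb1) (ne_of_gt hk0)
      have hcast : ((k - K : ℕ):ℝ) = (k:ℝ) - (K:ℝ) := by
        have : K ≤ k := le_trans (Nat.le_mul_of_pos_left K two_pos) hk2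
        exact Nat.cast_sub this
      have hhalf : (k:ℝ) / 2 ≤ ((k - K : ℕ):ℝ) := by
        rw [hcast]
        have : (2 * K : ℝ) ≤ (k:ℝ) := by exact_mod_cast hk2
        linarith
      have hts : ((k:ℝ) + b) ^ s ≤ (1 + b) ^ s * (k:ℝ) ^ s := by
        rw [← Real.mul_rpow hb1.le hk0.le]
        exact Real.rpow_le_rpow ht0.le hle hs0.le
      have hqs : q / ((1 + b) ^ s * (k:ℝ) ^ s) ≤ q / ((k:ℝ) + b) ^ s := by
        apply div_le_div_of_nonneg_left hq.le (Real.rpow_pos_of_pos ht0 s) hts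
      have hmul : (k:ℝ) / 2 * (q / ((1 + b) ^ s * (k:ℝ) ^ s))
          ≤ ((k - K : ℕ):ℝ) * (q / ((k:ℝ) + b) ^ s) := by
        apply mul_le_mul hhalf hqs (by positivity) (by positivity)
      have hid : (k:ℝ) / 2 * (q / ((1 + b) ^ s * (k:ℝ) ^ s)) = c * ((k:ℝ)) ^ (1 - s) := by
        have hks : ((k:ℝ)) ^ (1 - s) = (k:ℝ) / (k:ℝ) ^ s := by
          rw [Real.rpow_sub hk0, Real.rpow_one]
        rw [hks, hc]
        have h1 : ((1:ℝ) + b) ^ s ≠ 0 := ne_of_gt (Real.rpow_pos_of_pos hb1 s)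
        have h2 : ((k:ℝ)) ^ s ≠ 0 := ne_of_gt (Real.rpow_pos_of_pos hk0 s)
        field_simp
      have := hmul
      rw [hid] at this
      simp only [hE]
      nlinarith [mul_le_mul_of_nonneg_left hlog hp0.le]
    exact tendsto_atBot_mono' atTop hbound (TG.comp tendsto_natCast_atTop_atTop)
  have hEq : ∀ᶠ k : ℕ in atTop,
      Real.exp (E k) = ((k:ℝ) + b) ^ p *
        Real.exp (-(((k - K : ℕ):ℝ) * (q / ((k:ℝ) + b) ^ s))) := by
    filter_upwards [eventually_ge_atTop 1] with k hk1
    have hk1' : (1:ℝ) ≤ (k:ℝ) := by exact_mod_cast hk1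
    have ht0 : (0:ℝ) < (k:ℝ) + b := by linarith
    rw [Real.rpow_def_of_pos ht0, ← Real.exp_add]
    simp only [hE]
    congr 1
    ring
  exact (Real.tendsto_exp_atBot.comp TE).congr' hEq

/-- Polyak-type rate lemma with sublinear contraction:
z_{k+1} ≤ (1 − q/(k+b)^s) z_k + d/(k+b)^τ, s ∈ (0,1), τ > s, implies
limsup (k+b)^{τ−s} z_k ≤ d/q. -/
theorem stmt_12 (z : ℕ → ℝ) (b d q s τ : ℝ)
    (hz : ∀ k, 0 ≤ z k) (hb : 0 ≤ b) (hd : 0 < d) (hq : 0 < q)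
    (hs0 : 0 < s) (hs1 : s < 1) (hτ : s < τ)
    (hrec : ∀ k : ℕ, 1 ≤ k →
      z (k + 1) ≤ (1 - q / ((k : ℝ) + b) ^ s) * z k + d / ((k : ℝ) + b) ^ τ) :
    Filter.limsup (fun k : ℕ => ((k : ℝ) + b) ^ (τ - s) * z k) atTop ≤ d / q := by
  obtain ⟨p, hp⟩ : ∃ p : ℝ, p = τ - s := ⟨_, rfl⟩
  rw [show (fun k : ℕ => ((k : ℝ) + b) ^ (τ - s) * z k)
      = fun k : ℕ => ((k : ℝ) + b) ^ p * z k by rw [hp]]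
  have hp0 : 0 < p := by rw [hp]; linarith
  have hwnn : ∀ᶠ k : ℕ in atTop, (0:ℝ) ≤ ((k : ℝ) + b) ^ p * z k := by
    filter_upwards with k
    exact mul_nonneg (Real.rpow_nonneg (by positivity) _) (hz k)
  refine le_of_forall_pos_le_add fun ε hε => ?_
  refine Filter.limsup_le_of_le (isCoboundedUnder_le_of_eventually_le atTop hwnn) ?_
  obtain ⟨M, hM⟩ : ∃ M : ℝ, M = d / q + ε / 2 := ⟨_, rfl⟩
  have hM0 : 0 < M := by rw [hM]; have : 0 < d / q := div_pos hd hq; linarith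
  have hqM : q * M - d = q * (ε / 2) := by rw [hM]; field_simp; ring
  have htt : Tendsto (fun k : ℕ => (k:ℝ) + b) atTop atTop :=
    tendsto_atTop_add_const_right _ b tendsto_natCast_atTop_atTop
  have hev : ∀ᶠ k : ℕ in atTop, (1 ≤ (k:ℝ) + b) ∧ (q ≤ ((k:ℝ)+b) ^ s) ∧
      (M * p * (((k:ℝ)+b) ^ (s-1)) ≤ q * (ε/2)) ∧ 1 ≤ k := by
    have e1 : ∀ᶠ k : ℕ in atTop, 1 ≤ (k:ℝ) + b := htt.eventually_ge_atTop 1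
    have e2 : ∀ᶠ k : ℕ in atTop, q ≤ ((k:ℝ)+b) ^ s :=
      ((tendsto_rpow_atTop hs0).comp htt).eventually_ge_atTop q
    have e3 : ∀ᶠ k : ℕ in atTop, M * p * (((k:ℝ)+b) ^ (s-1)) ≤ q * (ε/2) := by
      have h0 : Tendsto (fun k : ℕ => M * p * (((k:ℝ)+b) ^ (s-1))) atTop (nhds 0) := by
        have := ((tendsto_rpow_neg_atTop (by linarith : (0:ℝ) < 1 - s)).comp htt).const_mul (M * p)
        simpa [Function.comp, neg_sub] using this
      exact h0.eventually_le_const (by positivity : (0:ℝ) < q * (ε/2))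
    have e4 : ∀ᶠ k : ℕ in atTop, 1 ≤ k := eventually_ge_atTop 1
    filter_upwards [e1, e2, e3, e4] with k h1 h2 h3 h4; exact ⟨h1, h2, h3, h4⟩
  obtain ⟨K, hK⟩ := eventually_atTop.1 hev
  obtain ⟨P, hPdef⟩ : ∃ P : ℕ → ℝ,
      P = fun n => ∏ j ∈ Finset.range n, (1 - q / (((K + j : ℕ) : ℝ) + b) ^ s) := ⟨_, rfl⟩
  have hfacts : ∀ k, K ≤ k → (0:ℝ) < (k:ℝ) + b ∧ 0 ≤ 1 - q / ((k:ℝ)+b) ^ s := by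
    intro k hk
    obtain ⟨h1, h2, h3, h4⟩ := hK k hk
    have ht0 : (0:ℝ) < (k:ℝ) + b := lt_of_lt_of_le one_pos h1
    have hts : (0:ℝ) < ((k:ℝ)+b) ^ s := Real.rpow_pos_of_pos ht0 s
    exact ⟨ht0, by rw [sub_nonneg, div_le_one hts]; exact h2⟩
  -- main induction
  have key : ∀ n, z (K + n) ≤ M / (((K + n : ℕ) : ℝ) + b) ^ p + z K * P n := by
    intro n
    induction n with
    | zero =>
      have ht0 : (0:ℝ) < ((K:ℕ):ℝ) + b := (hfacts K le_rfl).1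
      have h0 : (0:ℝ) ≤ M / (((K:ℕ):ℝ) + b) ^ p := by positivity
      simp only [hPdef, Finset.range_zero, Finset.prod_empty, mul_one, Nat.add_zero]
      linarith
    | succ n ih =>
      obtain ⟨h1, h2, h3, h4⟩ := hK (K + n) (Nat.le_add_right _ _)
      have ht0 : (0:ℝ) < ((K + n : ℕ):ℝ) + b := lt_of_lt_of_le one_pos h1
      have hts : (0:ℝ) < (((K + n : ℕ):ℝ) + b) ^ s := Real.rpow_pos_of_pos ht0 s
      have hfac : (0:ℝ) ≤ 1 - q / (((K + n : ℕ):ℝ) + b) ^ s :=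
        (hfacts (K + n) (Nat.le_add_right _ _)).2
      have step1 : z (K + n + 1) ≤ (1 - q / (((K + n : ℕ):ℝ) + b) ^ s) *
          (M / (((K + n : ℕ):ℝ) + b) ^ p + z K * P n) + d / (((K + n : ℕ):ℝ) + b) ^ τ := by
        refine (hrec (K + n) h4).trans ?_
        gcongr
      have haiii : M * p * (((K + n : ℕ):ℝ) + b) ^ s ≤ q * (ε/2) * ((((K + n : ℕ):ℝ)) + b) := by
        have hu : (((K + n : ℕ):ℝ) + b) ^ (s - 1) * ((((K + n : ℕ):ℝ)) + b)
            = (((K + n : ℕ):ℝ) + b) ^ s := by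
          rw [Real.rpow_sub ht0, Real.rpow_one, div_mul_cancel₀]
          exact ne_of_gt ht0
        calc M * p * (((K + n : ℕ):ℝ) + b) ^ s
            = M * p * ((((K + n : ℕ):ℝ) + b) ^ (s-1) * ((((K + n : ℕ):ℝ)) + b)) := by
              rw [hu]
          _ = M * p * (((K + n : ℕ):ℝ) + b) ^ (s-1) * ((((K + n : ℕ):ℝ)) + b) := by ring
          _ ≤ q * (ε/2) * ((((K + n : ℕ):ℝ)) + b) := by gcongr
      have hA := stepA12 ht0 hp0 hM0.le (show τ = s + p by rw [hp]; ring) hqM haiii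
      calc z (K + (n + 1)) = z (K + n + 1) := by ring_nf
        _ ≤ (1 - q / (((K + n : ℕ):ℝ) + b) ^ s) * (M / (((K + n : ℕ):ℝ) + b) ^ p + z K * P n)
            + d / (((K + n : ℕ):ℝ) + b) ^ τ := step1
        _ = ((1 - q / (((K + n : ℕ):ℝ) + b) ^ s) * (M / (((K + n : ℕ):ℝ) + b) ^ p)
            + d / (((K + n : ℕ):ℝ) + b) ^ τ)
            + z K * ((1 - q / (((K + n : ℕ):ℝ) + b) ^ s) * P n) := by ring
        _ ≤ M / ((((K + n : ℕ):ℝ) + b) + 1) ^ p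
            + z K * ((1 - q / (((K + n : ℕ):ℝ) + b) ^ s) * P n) := by linarith
        _ = M / (((K + (n + 1) : ℕ) : ℝ) + b) ^ p + z K * P (n + 1) := by
            congr 1
            · congr 2
              push_cast
              ring
            · simp only [hPdef]
              rw [Finset.prod_range_succ]
              ring
  -- product bound
  have hPnn : ∀ n, 0 ≤ P n := by
    intro n
    rw [hPdef]
    exact Finset.prod_nonneg fun j _ => (hfacts (K + j) (Nat.le_add_right _ _)).2
  have hPexp : ∀ k, K ≤ k →
      P (k - K) ≤ Real.exp (-(((k - K : ℕ):ℝ) * (q / ((k:ℝ) + b) ^ s))) := by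
    intro k hk
    have htk0 : (0:ℝ) < (k:ℝ) + b := (hfacts k hk).1
    have htks : (0:ℝ) < ((k:ℝ) + b) ^ s := Real.rpow_pos_of_pos htk0 s
    have h1 : P (k - K) ≤ ∏ _j ∈ Finset.range (k - K), Real.exp (-(q / ((k:ℝ) + b) ^ s)) := by
      rw [hPdef]
      refine Finset.prod_le_prod (fun j _ => (hfacts (K + j) (Nat.le_add_right _ _)).2)
        (fun j hj => ?_)
      have hjk : K + j ≤ k := by
        have := Finset.mem_range.1 hj
        omega
      have htj0 : (0:ℝ) < ((K + j : ℕ):ℝ) + b := (hfacts (K + j) (Nat.le_add_right _ _)).1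
      have hle : ((K + j : ℕ):ℝ) + b ≤ (k:ℝ) + b := by
        have : ((K + j : ℕ):ℝ) ≤ (k:ℝ) := by exact_mod_cast hjk
        linarith
      have hss : (((K + j : ℕ):ℝ) + b) ^ s ≤ ((k:ℝ) + b) ^ s :=
        Real.rpow_le_rpow htj0.le hle hs0.le
      have hdd : q / ((k:ℝ) + b) ^ s ≤ q / (((K + j : ℕ):ℝ) + b) ^ s :=
        div_le_div_of_nonneg_left hq.le (Real.rpow_pos_of_pos htj0 s) hss
      calc 1 - q / (((K + j : ℕ):ℝ) + b) ^ s ≤ 1 - q / ((k:ℝ) + b) ^ s := by linarith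
        _ ≤ Real.exp (-(q / ((k:ℝ) + b) ^ s)) := by
            have := Real.add_one_le_exp (-(q / ((k:ℝ) + b) ^ s)); linarith
    refine h1.trans ?_
    rw [Finset.prod_const, Finset.card_range, ← Real.exp_nat_mul]
    apply le_of_eq
    congr 1
    ring
  -- eventual bound
  have hsmall : ∀ᶠ k : ℕ in atTop,
      z K * (((k:ℝ) + b) ^ p * Real.exp (-(((k - K : ℕ):ℝ) * (q / ((k:ℝ) + b) ^ s)))) ≤ ε/2 := by
    have hT := (tendsto12 b q s p hb hq hs0 hs1 hp0 K).const_mul (z K)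
    rw [mul_zero] at hT
    exact hT.eventually_le_const (by positivity : (0:ℝ) < ε/2)
  have hfinal : ∀ᶠ k : ℕ in atTop, ((k:ℝ) + b) ^ p * z k ≤ d / q + ε := by
    filter_upwards [eventually_ge_atTop K, hsmall] with k hk hsm
    have htk0 : (0:ℝ) < (k:ℝ) + b := (hfacts k hk).1
    have htkp : (0:ℝ) < ((k:ℝ) + b) ^ p := Real.rpow_pos_of_pos htk0 p
    have hzk : z k ≤ M / ((k:ℝ) + b) ^ p + z K * P (k - K) := by
      have := key (k - K)
      rwa [Nat.add_sub_cancel' hk] at this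
    have h2 : ((k:ℝ) + b) ^ p * z k
        ≤ M + z K * (((k:ℝ) + b) ^ p * P (k - K)) := by
      calc ((k:ℝ) + b) ^ p * z k
          ≤ ((k:ℝ) + b) ^ p * (M / ((k:ℝ) + b) ^ p + z K * P (k - K)) := by
            exact mul_le_mul_of_nonneg_left hzk htkp.le
        _ = M + z K * (((k:ℝ) + b) ^ p * P (k - K)) := by
            field_simp
    have h3 : z K * (((k:ℝ) + b) ^ p * P (k - K))
        ≤ z K * (((k:ℝ) + b) ^ p * Real.exp (-(((k - K : ℕ):ℝ) * (q / ((k:ℝ) + b) ^ s)))) := by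
      have := hPexp k hk
      have hzK := hz K
      gcongr
    have : ((k:ℝ) + b) ^ p * z k ≤ M + ε/2 := by linarith
    rw [hM] at this
    linarith
  exact hfinal
end
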